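/- Let n > 1 be an odd integer and let f_{n,k}(x) = k·∑_{j≥0} C(n-1, 2j+1)(x^j − x^{j+1}) + 2·∑_{j≥0} C(n, 2j) x^j ∈ ℤ[x]. Then f_{n,k} is self-reciprocal if and only if k = 1, or (n = 3 and k = 3). -/

import Mathlib

open Polynomial Finset

/-- The polynomial `f_{n,k}` arising from reversed Dickson polynomials, over ℤ. -/
noncomputable def fnk (n : ℕ) (k : ℤ) : ℤ[X] :=
  Polynomial.C k * ∑ j ∈ range (n + 1),
      (Nat.choose (n - 1) (2 * j + 1) : ℤ[X]) * (X ^ j - X ^ (j + 1))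
    + 2 * ∑ j ∈ range (n + 1), (Nat.choose n (2 * j) : ℤ[X]) * X ^ j

lemma fnk_coeff (n : ℕ) (k : ℤ) (i : ℕ) :
    (fnk n k).coeff i = k * ((n-1).choose (2*i+1) : ℤ)
      - (if i = 0 then 0 else k * ((n-1).choose (2*i-1) : ℤ))
      + 2 * (n.choose (2*i) : ℤ) := by
  simp only [fnk, coeff_add, coeff_C_mul, mul_assoc, finset_sum_coeff, mul_sub,
    coeff_sub, coeff_natCast_mul, coeff_X_pow, mul_ite, mul_one, mul_zero,
    coeff_ofNat_mul]
  rw [Finset.sum_sub_distrib]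
  have e1 : ∀ (c : ℕ → ℤ), (∑ x ∈ Finset.range (n + 1), if i = x then c x else 0)
      = if i ≤ n then c i else 0 := by
    intro c; rw [Finset.sum_ite_eq]; simp [Nat.lt_succ_iff]
  have e2 : (∑ x ∈ Finset.range (n + 1), if i = x + 1 then ((n - 1).choose (2 * x + 1) : ℤ) else 0)
      = if i = 0 then 0 else ((n-1).choose (2*i-1) : ℤ) := by
    rcases i with _ | i'
    · simp
    · simp only [add_left_inj, if_neg (Nat.succ_ne_zero i')]
      rw [Finset.sum_ite_eq]
      by_cases h : i' ≤ n
      · simp [Nat.lt_succ_iff, h, show 2*(i'+1)-1 = 2*i'+1 by omega]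
      · have h1 : n - 1 < 2*i'+1 := by omega
        have h2 : n - 1 < 2*(i'+1)-1 := by omega
        simp [Nat.lt_succ_iff, h, Nat.choose_eq_zero_of_lt h1, Nat.choose_eq_zero_of_lt h2]
  rw [e1, e1, e2]
  by_cases h : i ≤ n
  · simp only [if_pos h]; split_ifs <;> ring
  · have h1 : n - 1 < 2*i+1 := by omega
    have h2 : n < 2*i := by omega
    have h3 : n - 1 < 2*i-1 := by omega
    simp only [if_neg h, Nat.choose_eq_zero_of_lt h1, Nat.choose_eq_zero_of_lt h2,
      Nat.choose_eq_zero_of_lt h3]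
    split_ifs <;> simp

lemma fnk_coeff_one (n : ℕ) (hn : 1 ≤ n) (i : ℕ) :
    (fnk n 1).coeff i = ((n+1).choose (2*i+1) : ℤ) := by
  obtain ⟨p, rfl⟩ : ∃ p, n = p + 1 := ⟨n - 1, by omega⟩
  rw [fnk_coeff]
  rcases i with _ | i'
  · simp [Nat.choose_one_right]; ring_nf
  · rw [if_neg (Nat.succ_ne_zero i')]
    have h1 : 2*(i'+1)+1 = (2*i'+2)+1 := by omega
    have h2 : 2*(i'+1)-1 = 2*i'+1 := by omega
    have h3 : 2*(i'+1) = (2*i'+1)+1 := by omega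
    rw [h1, h2, h3, Nat.add_sub_cancel,
      Nat.choose_succ_succ (p+1) (2*i'+2), Nat.choose_succ_succ p (2*i'+1),
      Nat.choose_succ_succ p (2*i'+2)]
    simp only [Nat.succ_eq_add_one]
    push_cast
    ring_nf

lemma fnk_natDegree_le (n : ℕ) (k : ℤ) (m : ℕ) (hm : n = 2*m+1) :
    (fnk n k).natDegree ≤ m := by
  rw [natDegree_le_iff_coeff_eq_zero]
  intro j hj
  rw [fnk_coeff, Nat.choose_eq_zero_of_lt (show n-1 < 2*j+1 by omega),
    Nat.choose_eq_zero_of_lt (show n-1 < 2*j-1 by omega),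
    Nat.choose_eq_zero_of_lt (show n < 2*j by omega)]
  split_ifs <;> simp

/-- A polynomial is self-reciprocal iff it equals its reverse. -/
theorem fnk_selfReciprocal_odd (n : ℕ) (k : ℤ) (hn : 1 < n) (hodd : Odd n) :
    (fnk n k).reverse = fnk n k ↔ k = 1 ∨ (n = 3 ∧ k = 3) := by
  obtain ⟨m, hm⟩ := hodd
  subst hm
  have hm1 : 1 ≤ m := by omega
  have hc2 : (2*m+1-1).choose (2*m-1) = 2*m := by
    have e : 2*m+1 - 1 = 2*m := by omega
    rw [e, show 2*m-1 = 2*m - 1 from rfl, Nat.choose_symm (by omega), Nat.choose_one_right]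
  have hc3 : (2*m+1).choose (2*m) = 2*m+1 := by
    have h := Nat.choose_symm (show 1 ≤ 2*m+1 by omega)
    rw [Nat.choose_one_right] at h
    simpa using h
  have hcm : (fnk (2*m+1) k).coeff m = 2*(2*(m:ℤ)+1) - k*(2*m) := by
    rw [fnk_coeff, Nat.choose_eq_zero_of_lt (show 2*m+1-1 < 2*m+1 by omega), hc2, hc3,
      if_neg (by omega)]
    push_cast; ring
  have hc0 : (fnk (2*m+1) k).coeff 0 = k*(2*(m:ℤ)) + 2 := by
    rw [fnk_coeff, if_pos rfl, Nat.mul_zero, Nat.choose_zero_right,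
      show 2*m+1-1 = 2*m by omega, Nat.choose_one_right]
    push_cast; ring
  constructor
  · intro h
    by_cases hzero : (fnk (2*m+1) k).coeff m = 0
    · right
      rw [hcm] at hzero
      have hd2 : ((m:ℤ) * (k - 2)) * 2 = 2 := by linear_combination -hzero
      have hd : (m : ℤ) * (k - 2) = 1 := by linarith
      have hu : IsUnit ((m:ℤ)) := IsUnit.of_mul_eq_one _ hd
      rw [Int.isUnit_iff] at hu
      have hm2 : m = 1 := by omega
      subst hm2
      push_cast at hd
      exact ⟨rfl, by linarith⟩
    · left
      have hdeg : (fnk (2*m+1) k).natDegree = m :=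
        le_antisymm (fnk_natDegree_le _ k m rfl) (le_natDegree_of_ne_zero hzero)
      have h0 := congrArg (fun p => p.coeff 0) h
      simp only [coeff_reverse, hdeg, revAt_le (Nat.zero_le m), Nat.sub_zero] at h0
      rw [hcm, hc0] at h0
      have h4 : (4:ℤ) * m * (k - 1) = 0 := by linear_combination -h0
      have hm0 : (m:ℤ) ≠ 0 := by positivity
      rcases mul_eq_zero.mp h4 with h' | h'
      · exfalso; rcases mul_eq_zero.mp h' with h'' | h'' <;> simp_all
      · linarith
  · rintro (rfl | ⟨hm3, rfl⟩)
    · have hdeg : (fnk (2*m+1) 1).natDegree = m := by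
        refine le_antisymm (fnk_natDegree_le _ 1 m rfl) (le_natDegree_of_ne_zero ?_)
        rw [fnk_coeff_one _ (by omega)]
        have e : (2*m+1+1).choose (2*m+1) = 2*m+1+1 := by
          have h := Nat.choose_symm (show 1 ≤ 2*m+1+1 by omega)
          rw [Nat.choose_one_right] at h
          simpa using h
        rw [e]
        exact_mod_cast (by omega : (2*(m:ℤ)+1+1) ≠ 0)
      ext i
      rw [coeff_reverse, hdeg]
      by_cases hi : i ≤ m
      · rw [revAt_le hi, fnk_coeff_one _ (by omega), fnk_coeff_one _ (by omega)]
        congr 1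
        rw [show 2*(m-i)+1 = (2*m+1+1) - (2*i+1) by omega, Nat.choose_symm (by omega)]
      · rw [revAt_eq_self_of_lt (by omega)]
    · have hm2 : m = 1 := by omega
      subst hm2
      have h8 : fnk (2*1+1) 3 = Polynomial.C 8 := by
        show fnk 3 3 = Polynomial.C 8
        unfold fnk
        simp [Finset.sum_range_succ]
        ring_nf
        norm_num [Nat.choose]
      rw [h8, reverse_C]
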